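/- arXiv:2411.16492 — 2 statements merged into one kernel-verified Lean document; each statement's English description precedes it below -/
import Mathlib

section
/- For all integers m ≥ 0 and k ≥ 0, R_W(m,k) = ∑_{j=0}^{k} C(⌈m/2⌉, j) · S(m−j, m−k). -/
open Finset

/-- Stirling number of the second kind `S(n,l)`. -/
def stirling2 : ℕ → ℕ → ℕ
  | 0, 0 => 1
  | 0, _ + 1 => 0
  | _ + 1, 0 => 0
  | n + 1, l + 1 => (l + 1) * stirling2 n (l + 1) + stirling2 n l

/-- Stirling number of the second kind with integer lower argument, extended by
`S(n,l) = 0` whenever `l < 0`. -/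
def stirlingZ (n : ℕ) (l : ℤ) : ℕ := if 0 ≤ l then stirling2 n l.toNat else 0

/-- `whiteCount m k` is the number of `k`-element subsets `P` of the white squares
`{(i,j) ∈ {1,…,m} × {1,…,m} : i+j even}` such that any two distinct elements `(i,j)`
and `(i',j')` of `P` satisfy `i+j ≠ i'+j'` and `i−j ≠ i'−j'` (nonattacking bishops on
the white squares of the `m × m` board). -/
def whiteCount (m k : ℕ) : ℕ :=
  ((((Finset.Icc 1 m ×ˢ Finset.Icc 1 m).filter (fun a => Even (a.1 + a.2))).powersetCard
      k).filter
    (fun P => ∀ a ∈ P, ∀ b ∈ P, a ≠ b →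
      a.1 + a.2 ≠ b.1 + b.2 ∧ (a.1 : ℤ) - a.2 ≠ (b.1 : ℤ) - b.2)).card

lemma stirling2_of_lt : ∀ n l : ℕ, n < l → stirling2 n l = 0 := by
  intro n
  induction n with
  | zero => intro l hl; match l, hl with
            | l+1, _ => rfl
  | succ n ih => intro l hl
                 match l, hl with
                 | l+1, hl =>
                   show (l+1) * stirling2 n (l+1) + stirling2 n l = 0
                   rw [ih (l+1) (by omega), ih l (by omega)]; ring

lemma stirling2_self (n : ℕ) : stirling2 n n = 1 := by
  induction n with
  | zero => rfl
  | succ n ih => show (n+1) * stirling2 n (n+1) + stirling2 n n = 1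
                 rw [ih, stirling2_of_lt n (n+1) (by omega)]; ring

lemma stirling2_one (n : ℕ) : stirling2 (n+1) 1 = 1 := by
  induction n with
  | zero => rfl
  | succ n ih => show 1 * stirling2 (n+1) 1 + stirling2 (n+1) 0 = 1
                 rw [ih]; rfl

lemma stirling2_zero (n : ℕ) : stirling2 (n+1) 0 = 0 := rfl

lemma stirlingZ_of_neg (n : ℕ) {z : ℤ} (hz : z < 0) : stirlingZ n z = 0 := by
  simp [stirlingZ, not_le.mpr hz]

lemma stirlingZ_self (n : ℕ) : stirlingZ n (n : ℤ) = 1 := by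
  rw [stirlingZ, if_pos (by omega)]
  rw [Int.toNat_natCast]
  exact stirling2_self n

lemma stirlingZ_of_lt (n : ℕ) {z : ℤ} (hz : (n : ℤ) < z) : stirlingZ n z = 0 := by
  have h0 : (0:ℤ) ≤ z := by omega
  rw [stirlingZ, if_pos h0]
  exact stirling2_of_lt n z.toNat (by omega)

-- key identity
lemma stirlingZ_key (n : ℕ) (z : ℤ) :
    (stirlingZ (n+2) z : ℤ) + stirlingZ (n+1) z
      = stirlingZ n (z-2) + 2*z*stirlingZ n (z-1) + z*(z+1)*stirlingZ n z := by
  rcases lt_trichotomy z 0 with hz | hz | hz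
  · rw [stirlingZ_of_neg _ hz, stirlingZ_of_neg _ hz, stirlingZ_of_neg _ hz,
      stirlingZ_of_neg n (show z-1 < 0 by omega), stirlingZ_of_neg n (show z-2 < 0 by omega)]
    ring
  · subst hz
    simp [stirlingZ, stirling2_zero, stirlingZ_of_neg n (show (-1:ℤ) < 0 by omega),
      stirlingZ_of_neg n (show (-2:ℤ) < 0 by omega)]
  · rcases eq_or_lt_of_le (show (1:ℤ) ≤ z by omega) with hz1 | hz1
    · -- z = 1
      have hz2 : z = 1 := by omega
      subst hz2
      have e1 : stirlingZ (n+2) 1 = 1 := by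
        rw [stirlingZ, if_pos (by omega)]; exact stirling2_one (n+1)
      have e2 : stirlingZ (n+1) 1 = 1 := by
        rw [stirlingZ, if_pos (by omega)]; exact stirling2_one n
      have e3 : stirlingZ n (1-1) = stirling2 n 0 := by
        rw [stirlingZ, if_pos (by omega)]; rfl
      have e4 : stirlingZ n 1 = stirling2 n 1 := by
        rw [stirlingZ, if_pos (by omega)]; rfl
      rw [e1, e2, e3, e4, stirlingZ_of_neg n (show (1:ℤ)-2 < 0 by omega)]
      match n with
      | 0 => rfl
      | n+1 => rw [stirling2_zero, stirling2_one n]; ring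
    · -- z ≥ 2
      obtain ⟨a, ha⟩ : ∃ a : ℕ, z = (a : ℤ) + 2 := ⟨(z-2).toNat, by omega⟩
      subst ha
      have h1 : stirlingZ (n+2) ((a:ℤ)+2) = stirling2 (n+2) (a+2) := by
        rw [stirlingZ, if_pos (by omega)]; congr 1
      have h2 : stirlingZ (n+1) ((a:ℤ)+2) = stirling2 (n+1) (a+2) := by
        rw [stirlingZ, if_pos (by omega)]; congr 1
      have h3 : stirlingZ n ((a:ℤ)+2-2) = stirling2 n a := by
        rw [stirlingZ, if_pos (by omega)]; congr 1; omega
      have h4 : stirlingZ n ((a:ℤ)+2-1) = stirling2 n (a+1) := by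
        rw [stirlingZ, if_pos (by omega)]
        congr 1; omega
      have h5 : stirlingZ n ((a:ℤ)+2) = stirling2 n (a+2) := by
        rw [stirlingZ, if_pos (by omega)]; congr 1
      rw [h1, h2, h3, h4, h5]
      have d1 : stirling2 (n+2) (a+2) = (a+2) * stirling2 (n+1) (a+2) + stirling2 (n+1) (a+1) := rfl
      have d2 : stirling2 (n+1) (a+2) = (a+2) * stirling2 n (a+2) + stirling2 n (a+1) := rfl
      have d3 : stirling2 (n+1) (a+1) = (a+1) * stirling2 n (a+1) + stirling2 n a := rfl
      rw [d1, d2, d3]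
      push_cast
      ring

def T (m k : ℕ) : ℕ :=
  ∑ j ∈ Finset.range (k + 1), Nat.choose ((m + 1) / 2) j * stirlingZ (m - j) ((m : ℤ) - k)

lemma T_zero (m : ℕ) : T m 0 = 1 := by
  simp [T, stirlingZ_self]

lemma T_vanish (m k : ℕ) (h : m < k) : T m k = 0 := by
  unfold T
  apply Finset.sum_eq_zero
  intro j hj
  rw [stirlingZ_of_neg _ (show (m:ℤ) - k < 0 by omega), mul_zero]

/-- intermediate closed form -/
noncomputable def tA (m : ℕ) : ℕ → ℤ
  | 0 => 1
  | k+1 => (T m (k+1) : ℤ) + ((m:ℤ) - k) * T m k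

lemma choose_half_eq_zero {m j : ℕ} (h : m < j) : Nat.choose ((m+1)/2) j = 0 :=
  Nat.choose_eq_zero_of_lt (by omega)

lemma tA_vanish (m k : ℕ) (h : m < k) : tA m k = 0 := by
  match k, h with
  | k+1, h =>
    show (T m (k+1) : ℤ) + ((m:ℤ) - k) * T m k = 0
    rcases Nat.lt_or_ge m (k) with h2 | h2
    · rw [T_vanish m (k+1) (by omega), T_vanish m k h2]; push_cast; ring
    · have : m = k := by omega
      subst this
      rw [T_vanish m (m+1) (by omega)]; push_cast; ring

lemma alg_succ (m k : ℕ) :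
    (T (m+2) (k+1) : ℤ) = tA m (k+1) + ((m:ℤ) + 2 - k) * tA m k := by
  obtain ⟨z, hzdef⟩ : ∃ z : ℤ, z = (m:ℤ) + 1 - k := ⟨_, rfl⟩
  set c : ℕ := (m+1)/2 with hcdef
  have hc2 : (m+2+1)/2 = c + 1 := by omega
  have hLHS : (T (m+2) (k+1) : ℤ)
      = ∑ j ∈ Finset.range (k+2), (Nat.choose (c+1) j : ℤ) * stirlingZ (m+2-j) z := by
    unfold T
    push_cast
    refine Finset.sum_congr rfl fun j hj => ?_
    have h2 : (m:ℤ)+2-((k:ℤ)+1) = z := by omega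
    rw [hc2, h2]
  have hL2 : (∑ j ∈ Finset.range (k+2), (Nat.choose (c+1) j : ℤ) * stirlingZ (m+2-j) z)
      = (∑ j ∈ Finset.range (k+2), (Nat.choose c j : ℤ) * stirlingZ (m+2-j) z)
        + ∑ j ∈ Finset.range (k+1), (Nat.choose c j : ℤ) * stirlingZ (m+1-j) z := by
    rw [Finset.sum_range_succ' (fun j => (Nat.choose (c+1) j : ℤ) * stirlingZ (m+2-j) z) (k+1)]
    rw [Finset.sum_range_succ' (fun j => (Nat.choose c j : ℤ) * stirlingZ (m+2-j) z) (k+1)]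
    have hthis : ∀ j ∈ Finset.range (k+1),
        (Nat.choose (c+1) (j+1) : ℤ) * stirlingZ (m+2-(j+1)) z
        = (Nat.choose c (j+1) : ℤ) * stirlingZ (m+2-(j+1)) z
          + (Nat.choose c j : ℤ) * stirlingZ (m+1-j) z := by
      intro j hj
      rw [Nat.choose_succ_succ c j]
      have he : m+2-(j+1) = m+1-j := by omega
      rw [he]
      push_cast
      ring
    rw [Finset.sum_congr rfl hthis, Finset.sum_add_distrib]
    simp
    ring
  rw [hLHS, hL2]
  have hkill : ∀ (j a : ℕ) (w : ℤ), ((a:ℤ) < w ∨ m < j) →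
      (Nat.choose c j : ℤ) * stirlingZ a w = 0 := by
    rintro j a w (h | h)
    · rw [stirlingZ_of_lt a h]; push_cast; ring
    · rw [hcdef, choose_half_eq_zero h]; push_cast; ring
  have hS1 : (∑ j ∈ Finset.range (k+2), (Nat.choose c j : ℤ) * stirlingZ (m+1-j) z)
      = ∑ j ∈ Finset.range (k+1), (Nat.choose c j : ℤ) * stirlingZ (m+1-j) z := by
    rw [Finset.sum_range_succ]
    have h0 : (Nat.choose c (k+1) : ℤ) * stirlingZ (m+1-(k+1)) z = 0 := by
      apply hkill
      rcases le_or_gt (k+1) m with h | h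
      · left; omega
      · right; omega
    rw [h0, add_zero]
  rw [← hS1, ← Finset.sum_add_distrib]
  have hmain : ∀ j ∈ Finset.range (k+2),
      (Nat.choose c j : ℤ) * stirlingZ (m+2-j) z + (Nat.choose c j : ℤ) * stirlingZ (m+1-j) z
      = (Nat.choose c j : ℤ) * stirlingZ (m-j) (z-2)
        + 2*z*((Nat.choose c j : ℤ) * stirlingZ (m-j) (z-1))
        + z*(z+1)*((Nat.choose c j : ℤ) * stirlingZ (m-j) z) := by
    intro j hj
    rcases le_or_gt j m with h | h
    · have e2 : m+2-j = (m-j)+2 := by omega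
      have e1 : m+1-j = (m-j)+1 := by omega
      rw [e2, e1]
      have hkey := stirlingZ_key (m-j) z
      linear_combination (Nat.choose c j : ℤ) * hkey
    · rw [hcdef, choose_half_eq_zero h]
      push_cast; ring
  rw [Finset.sum_congr rfl hmain]
  rw [Finset.sum_add_distrib, Finset.sum_add_distrib, ← Finset.mul_sum, ← Finset.mul_sum]
  have hR0 : (∑ j ∈ Finset.range (k+2), (Nat.choose c j : ℤ) * stirlingZ (m-j) (z-2))
      = (T m (k+1) : ℤ) := by
    unfold T
    push_cast
    refine Finset.sum_congr rfl fun j hj => ?_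
    have h2 : z - 2 = (m:ℤ) - (↑k+1) := by omega
    rw [h2, hcdef]
  have hR1 : (∑ j ∈ Finset.range (k+2), (Nat.choose c j : ℤ) * stirlingZ (m-j) (z-1))
      = (T m k : ℤ) := by
    rw [Finset.sum_range_succ]
    have h0 : (Nat.choose c (k+1) : ℤ) * stirlingZ (m-(k+1)) (z-1) = 0 := by
      apply hkill
      rcases le_or_gt (k+1) m with h | h
      · left; omega
      · right; omega
    rw [h0, add_zero]
    unfold T
    push_cast
    refine Finset.sum_congr rfl fun j hj => ?_
    have h2 : z - 1 = (m:ℤ) - ↑k := by omega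
    rw [h2, hcdef]
  have hR2 : (∑ j ∈ Finset.range (k+2), (Nat.choose c j : ℤ) * stirlingZ (m-j) z)
      = ∑ j ∈ Finset.range k, (Nat.choose c j : ℤ) * stirlingZ (m-j) z := by
    rw [Finset.sum_range_succ]
    have h0 : (Nat.choose c (k+1) : ℤ) * stirlingZ (m-(k+1)) z = 0 := by
      apply hkill
      rcases le_or_gt (k+1) m with h | h
      · left; omega
      · right; omega
    rw [h0, add_zero, Finset.sum_range_succ]
    have h1 : (Nat.choose c k : ℤ) * stirlingZ (m-k) z = 0 := by
      apply hkill
      rcases le_or_gt k m with h | h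
      · left; omega
      · right; omega
    rw [h1, add_zero]
  rw [hR0, hR1, hR2]
  rcases k with _ | k'
  · show (T m 1 : ℤ) + 2*z*(T m 0) + z*(z+1)*(∑ j ∈ Finset.range 0, (Nat.choose c j : ℤ) * stirlingZ (m-j) z)
      = tA m 1 + ((m:ℤ)+2-0) * tA m 0
    show (T m 1 : ℤ) + 2*z*(T m 0) + z*(z+1)*(∑ j ∈ Finset.range 0, (Nat.choose c j : ℤ) * stirlingZ (m-j) z)
      = ((T m 1 : ℤ) + ((m:ℤ) - 0) * T m 0) + ((m:ℤ)+2-0) * 1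
    rw [T_zero, Finset.sum_range_zero]
    have hz : z = (m:ℤ) + 1 := by omega
    rw [hz]
    push_cast
    ring
  · have hQ : (∑ j ∈ Finset.range (k'+1), (Nat.choose c j : ℤ) * stirlingZ (m-j) z)
        = (T m k' : ℤ) := by
      unfold T
      push_cast
      refine Finset.sum_congr rfl fun j hj => ?_
      have h2 : z = (m:ℤ) - ↑k' := by omega
      rw [h2, hcdef]
    rw [hQ]
    show (T m (k'+2) : ℤ) + 2*z*(T m (k'+1)) + z*(z+1)*(T m k')
      = ((T m (k'+2) : ℤ) + ((m:ℤ) - (k'+1)) * T m (k'+1))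
        + ((m:ℤ)+2-(k'+1)) * ((T m (k'+1) : ℤ) + ((m:ℤ) - k') * T m k')
    have hz : z = (m:ℤ) - k' := by push_cast at hzdef ⊢; omega
    rw [hz]
    push_cast
    ring

def plc (B : Finset (ℤ × ℤ)) (k : ℕ) : Finset (Finset (ℤ × ℤ)) :=
  (B.powersetCard k).filter
    (fun P => ∀ a ∈ P, ∀ b ∈ P, a ≠ b → a.1 ≠ b.1 ∧ a.2 ≠ b.2)

lemma plc_zero (B : Finset (ℤ × ℤ)) : (plc B 0).card = 1 := by
  rw [plc, Finset.powersetCard_zero, Finset.filter_singleton, if_pos (by simp)]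
  rfl

lemma plc_card_eq_zero (B : Finset (ℤ × ℤ)) (R : Finset ℤ) (hR : ∀ p ∈ B, p.1 ∈ R)
    (k : ℕ) (h : R.card < k) : (plc B k).card = 0 := by
  rw [Finset.card_eq_zero]
  rw [Finset.eq_empty_iff_forall_notMem]
  intro P hP
  rw [plc, Finset.mem_filter, Finset.mem_powersetCard] at hP
  obtain ⟨⟨hPB, hcard⟩, hpred⟩ := hP
  have hinj : Set.InjOn Prod.fst (P : Set (ℤ × ℤ)) := by
    intro a ha b hb hab
    by_contra hne
    exact (hpred a ha b hb hne).1 hab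
  have h1 : (P.image Prod.fst).card = k := by
    rw [Finset.card_image_of_injOn hinj, hcard]
  have h2 : P.image Prod.fst ⊆ R := by
    intro x hx
    obtain ⟨p, hp, rfl⟩ := Finset.mem_image.mp hx
    exact hR p (hPB hp)
  have := Finset.card_le_card h2
  omega

lemma removal (B : Finset (ℤ × ℤ)) (w₀ : ℤ)
    (hdom : ∀ p ∈ B, ((p.1, w₀) : ℤ × ℤ) ∈ B) (k : ℕ) :
    (plc B (k+1)).card
      = (plc (B.filter fun p => p.2 ≠ w₀) (k+1)).card
        + ((B.filter fun p => p.2 = w₀).card - k)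
          * (plc (B.filter fun p => p.2 ≠ w₀) k).card := by
  classical
  set B' := B.filter fun p => p.2 ≠ w₀ with hB'
  set col := B.filter fun p => p.2 = w₀ with hcol
  have hsplit : (plc B (k+1)).card
      = ((plc B (k+1)).filter fun P => ∀ p ∈ P, p.2 ≠ w₀).card
        + ((plc B (k+1)).filter fun P => ¬ ∀ p ∈ P, p.2 ≠ w₀).card :=
    (Finset.card_filter_add_card_filter_not _).symm
  -- part 0 : no rook in column w₀
  have h0 : (plc B (k+1)).filter (fun P => ∀ p ∈ P, p.2 ≠ w₀) = plc B' (k+1) := by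
    ext P
    simp only [plc, Finset.mem_filter, Finset.mem_powersetCard, hB']
    constructor
    · rintro ⟨⟨⟨hPB, hcard⟩, hpred⟩, hno⟩
      refine ⟨⟨fun p hp => Finset.mem_filter.mpr ⟨hPB hp, hno p hp⟩, hcard⟩, hpred⟩
    · rintro ⟨⟨hPB, hcard⟩, hpred⟩
      refine ⟨⟨⟨fun p hp => (Finset.mem_filter.mp (hPB hp)).1, hcard⟩, hpred⟩,
        fun p hp => (Finset.mem_filter.mp (hPB hp)).2⟩
  -- part 1 : one rook in column w₀
  set S₁ := (plc B (k+1)).filter (fun P => ¬ ∀ p ∈ P, p.2 ≠ w₀) with hS₁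
  have hmapsto : ∀ P ∈ S₁, P.filter (fun p => p.2 ≠ w₀) ∈ plc B' k := by
    intro P hP
    rw [hS₁, Finset.mem_filter] at hP
    obtain ⟨hPp, hex⟩ := hP
    rw [plc, Finset.mem_filter, Finset.mem_powersetCard] at hPp
    obtain ⟨⟨hPB, hcard⟩, hpred⟩ := hPp
    push_neg at hex
    obtain ⟨q, hqP, hq2⟩ := hex
    have hone : P.filter (fun p => p.2 = w₀) = {q} := by
      ext r
      simp only [Finset.mem_filter, Finset.mem_singleton]
      constructor
      · rintro ⟨hrP, hr2⟩
        by_contra hne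
        exact (hpred r hrP q hqP hne).2 (by rw [hr2, hq2])
      · rintro rfl; exact ⟨hqP, hq2⟩
    have hcards : (P.filter (fun p => p.2 = w₀)).card
        + (P.filter (fun p => ¬ p.2 = w₀)).card = k + 1 := by
      rw [Finset.card_filter_add_card_filter_not, hcard]
    rw [hone, Finset.card_singleton] at hcards
    have hckeq : (P.filter (fun p => p.2 ≠ w₀)).card = k := by
      simp only [ne_eq]
      omega
    rw [plc, Finset.mem_filter, Finset.mem_powersetCard]
    refine ⟨⟨?_, hckeq⟩, ?_⟩
    · intro p hp
      rw [Finset.mem_filter] at hp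
      exact Finset.mem_filter.mpr ⟨hPB hp.1, hp.2⟩
    · intro a ha b hb hab
      rw [Finset.mem_filter] at ha hb
      exact hpred a ha.1 b hb.1 hab
  have h1 : S₁.card = ∑ P' ∈ plc B' k, (col.card - k) := by
    rw [Finset.card_eq_sum_card_fiberwise hmapsto]
    refine Finset.sum_congr rfl fun P' hP' => ?_
    -- fiber over P' has cardinality col.card - k
    rw [plc, Finset.mem_filter, Finset.mem_powersetCard] at hP'
    obtain ⟨⟨hP'B, hP'card⟩, hP'pred⟩ := hP'
    set rows := P'.image Prod.fst with hrows
    have hrowscard : rows.card = k := by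
      rw [hrows, Finset.card_image_of_injOn, hP'card]
      intro a ha b hb hab
      by_contra hne
      exact (hP'pred a ha b hb hne).1 hab
    set avail := col.filter (fun q => q.1 ∉ rows) with havail
    -- the fiber is the image of avail under (insert · P')
    have hfib : S₁.filter (fun P => P.filter (fun p => p.2 ≠ w₀) = P')
        = avail.image (fun q => insert q P') := by
      ext P
      simp only [Finset.mem_filter, Finset.mem_image]
      constructor
      · rintro ⟨hPS, hPf⟩
        rw [hS₁, Finset.mem_filter] at hPS
        obtain ⟨hPp, hex⟩ := hPS
        rw [plc, Finset.mem_filter, Finset.mem_powersetCard] at hPp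
        obtain ⟨⟨hPB, hcard⟩, hpred⟩ := hPp
        push_neg at hex
        obtain ⟨q, hqP, hq2⟩ := hex
        refine ⟨q, ?_, ?_⟩
        · rw [havail, Finset.mem_filter]
          refine ⟨Finset.mem_filter.mpr ⟨hPB hqP, hq2⟩, ?_⟩
          rw [hrows, ← hPf]
          intro hmem
          rw [Finset.mem_image] at hmem
          obtain ⟨p, hp, hp1⟩ := hmem
          rw [Finset.mem_filter] at hp
          obtain ⟨hpP, hp2⟩ := hp
          have hne : p ≠ q := fun h => hp2 (h ▸ hq2)
          exact (hpred p hpP q hqP hne).1 hp1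
        · -- P = insert q P'
          rw [← hPf]
          symm
          ext r
          simp only [Finset.mem_insert, Finset.mem_filter]
          constructor
          · intro hrP
            by_cases hr2 : r.2 = w₀
            · left
              by_contra hne
              exact (hpred r hrP q hqP hne).2 (by rw [hr2, hq2])
            · right; exact ⟨hrP, hr2⟩
          · rintro (rfl | ⟨hrP, _⟩)
            · exact hqP
            · exact hrP
      · rintro ⟨q, hqavail, rfl⟩
        rw [havail, Finset.mem_filter] at hqavail
        obtain ⟨hqcol, hqrows⟩ := hqavail
        rw [hcol, Finset.mem_filter] at hqcol
        obtain ⟨hqB, hq2⟩ := hqcol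
        have hqnotP' : q ∉ P' := by
          intro h
          have := Finset.mem_filter.mp (hP'B h)
          exact this.2 hq2
        have hrowfree : ∀ p ∈ P', q.1 ≠ p.1 := by
          intro p hp h
          exact hqrows (hrows ▸ Finset.mem_image.mpr ⟨p, hp, h.symm⟩)
        constructor
        · rw [hS₁, Finset.mem_filter]
          constructor
          · rw [plc, Finset.mem_filter, Finset.mem_powersetCard]
            refine ⟨⟨?_, ?_⟩, ?_⟩
            · intro p hp
              rcases Finset.mem_insert.mp hp with rfl | hp
              · exact hqB
              · exact Finset.filter_subset _ _ (hP'B hp)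
            · rw [Finset.card_insert_of_notMem hqnotP', hP'card]
            · intro a ha b hb hab
              rcases Finset.mem_insert.mp ha with rfl | ha' <;>
                rcases Finset.mem_insert.mp hb with rfl | hb'
              · exact absurd rfl hab
              · refine ⟨hrowfree b hb', ?_⟩
                have := Finset.mem_filter.mp (hP'B hb')
                rw [hq2]
                exact fun h => this.2 h.symm
              · refine ⟨fun h => hrowfree a ha' h.symm, ?_⟩
                have := Finset.mem_filter.mp (hP'B ha')
                rw [hq2]
                exact this.2
              · exact hP'pred a ha' b hb' hab
          · push_neg
            exact ⟨q, Finset.mem_insert_self q P', hq2⟩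
        · rw [Finset.filter_insert, if_neg (by simpa using hq2)]
          apply Finset.filter_true_of_mem
          intro p hp
          exact (Finset.mem_filter.mp (hP'B hp)).2
    rw [hfib]
    rw [Finset.card_image_of_injOn]
    · -- avail.card = col.card - k
      have hbad : col.filter (fun q => q.1 ∈ rows) = P'.image (fun p => (p.1, w₀)) := by
        ext q
        simp only [Finset.mem_filter, Finset.mem_image]
        constructor
        · rintro ⟨hqcol, hqrow⟩
          rw [hrows, Finset.mem_image] at hqrow
          obtain ⟨p, hp, hp1⟩ := hqrow
          refine ⟨p, hp, ?_⟩
          rw [hcol, Finset.mem_filter] at hqcol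
          rw [Prod.ext_iff]
          exact ⟨hp1, hqcol.2.symm⟩
        · rintro ⟨p, hp, rfl⟩
          have hpB : p ∈ B := Finset.filter_subset _ _ (hP'B hp)
          refine ⟨Finset.mem_filter.mpr ⟨hdom p hpB, rfl⟩, ?_⟩
          rw [hrows]
          exact Finset.mem_image.mpr ⟨p, hp, rfl⟩
      have hbadcard : (col.filter (fun q => q.1 ∈ rows)).card = k := by
        rw [hbad, Finset.card_image_of_injOn, hP'card]
        intro a ha b hb hab
        simp only [Prod.mk.injEq] at hab
        by_contra hne
        exact (hP'pred a ha b hb hne).1 hab.1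
      have hsum : (col.filter (fun q => q.1 ∈ rows)).card
          + (col.filter (fun q => q.1 ∉ rows)).card = col.card :=
        Finset.card_filter_add_card_filter_not _
      rw [havail]
      omega
    · -- injectivity of insert · P' on avail
      intro q hq q' hq' heq
      simp only [Finset.mem_coe, havail, Finset.mem_filter, hcol] at hq hq'
      have hqnotP' : q' ∉ P' := by
        intro h
        exact (Finset.mem_filter.mp (hP'B h)).2 hq'.1.2
      have heq' : insert q P' = insert q' P' := heq
      have : q ∈ insert q' P' := heq' ▸ Finset.mem_insert_self q P'
      rcases Finset.mem_insert.mp this with h | h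
      · exact h
      · exact absurd h (by
          intro hc
          exact (Finset.mem_filter.mp (hP'B hc)).2 hq.1.2)
  rw [hsplit, h0, h1, Finset.sum_const, smul_eq_mul, mul_comm]

lemma card_transfer {α β : Type*} [DecidableEq α] [DecidableEq β]
    (A : Finset α) (B : Finset β)
    (pa : α → α → Prop) (pb : β → β → Prop)
    [∀ a b, Decidable (pa a b)] [∀ a b, Decidable (pb a b)]
    (φ : α → β)
    (hmem : ∀ a ∈ A, φ a ∈ B)
    (hinj : ∀ a ∈ A, ∀ b ∈ A, φ a = φ b → a = b)
    (hsurj : ∀ b ∈ B, ∃ a ∈ A, φ a = b)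
    (hp : ∀ a ∈ A, ∀ b ∈ A, a ≠ b → (pa a b ↔ pb (φ a) (φ b)))
    (k : ℕ) :
    ((A.powersetCard k).filter (fun P => ∀ a ∈ P, ∀ b ∈ P, a ≠ b → pa a b)).card =
    ((B.powersetCard k).filter (fun P => ∀ a ∈ P, ∀ b ∈ P, a ≠ b → pb a b)).card := by
  classical
  apply Finset.card_bij (fun P _ => P.image φ)
  · -- maps to
    intro P hP
    rw [Finset.mem_filter, Finset.mem_powersetCard] at hP ⊢
    obtain ⟨⟨hPA, hcard⟩, hpred⟩ := hP
    refine ⟨⟨?_, ?_⟩, ?_⟩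
    · intro b hb
      obtain ⟨a, ha, rfl⟩ := Finset.mem_image.mp hb
      exact hmem a (hPA ha)
    · rw [Finset.card_image_of_injOn, hcard]
      intro a ha b hb hab
      exact hinj a (hPA ha) b (hPA hb) hab
    · intro x hx y hy hxy
      obtain ⟨a, ha, rfl⟩ := Finset.mem_image.mp hx
      obtain ⟨b, hb, rfl⟩ := Finset.mem_image.mp hy
      have hab : a ≠ b := fun h => hxy (by rw [h])
      exact (hp a (hPA ha) b (hPA hb) hab).mp (hpred a ha b hb hab)
  · -- injective
    intro P hP P' hP' heq
    rw [Finset.mem_filter, Finset.mem_powersetCard] at hP hP'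
    ext a
    constructor
    · intro ha
      have : φ a ∈ P'.image φ := heq ▸ Finset.mem_image_of_mem φ ha
      obtain ⟨b, hb, hba⟩ := Finset.mem_image.mp this
      have : b = a := hinj b (hP'.1.1 hb) a (hP.1.1 ha) hba
      exact this ▸ hb
    · intro ha
      have : φ a ∈ P.image φ := heq ▸ Finset.mem_image_of_mem φ ha
      obtain ⟨b, hb, hba⟩ := Finset.mem_image.mp this
      have : b = a := hinj b (hP.1.1 hb) a (hP'.1.1 ha) hba
      exact this ▸ hb
  · -- surjective
    intro Q hQ
    rw [Finset.mem_filter, Finset.mem_powersetCard] at hQ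
    obtain ⟨⟨hQB, hQcard⟩, hQpred⟩ := hQ
    refine ⟨A.filter (fun a => φ a ∈ Q), ?_, ?_⟩
    · rw [Finset.mem_filter, Finset.mem_powersetCard]
      have himg : (A.filter (fun a => φ a ∈ Q)).image φ = Q := by
        ext b
        constructor
        · intro hb
          obtain ⟨a, ha, rfl⟩ := Finset.mem_image.mp hb
          exact (Finset.mem_filter.mp ha).2
        · intro hb
          obtain ⟨a, ha, rfl⟩ := hsurj b (hQB hb)
          exact Finset.mem_image.mpr ⟨a, Finset.mem_filter.mpr ⟨ha, hb⟩, rfl⟩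
      have hinjOn : Set.InjOn φ (A.filter (fun a => φ a ∈ Q) : Set α) := by
        intro a ha b hb hab
        exact hinj a (Finset.mem_filter.mp (Finset.mem_coe.mp ha)).1
          b (Finset.mem_filter.mp (Finset.mem_coe.mp hb)).1 hab
      refine ⟨⟨Finset.filter_subset _ _, ?_⟩, ?_⟩
      · calc (A.filter (fun a => φ a ∈ Q)).card
            = ((A.filter (fun a => φ a ∈ Q)).image φ).card :=
              (Finset.card_image_of_injOn hinjOn).symm
          _ = k := by rw [himg, hQcard]
      · intro a ha b hb hab
        rw [Finset.mem_filter] at ha hb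
        have hne : φ a ≠ φ b := fun h => hab (hinj a ha.1 b hb.1 h)
        exact (hp a ha.1 b hb.1 hab).mpr (hQpred _ ha.2 _ hb.2 hne)
    · -- image equals Q
      ext b
      constructor
      · intro hb
        obtain ⟨a, ha, rfl⟩ := Finset.mem_image.mp hb
        exact (Finset.mem_filter.mp ha).2
      · intro hb
        obtain ⟨a, ha, rfl⟩ := hsurj b (hQB hb)
        exact Finset.mem_image.mpr ⟨a, Finset.mem_filter.mpr ⟨ha, hb⟩, rfl⟩

noncomputable def bd (m : ℕ) : Finset (ℤ × ℤ) :=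
  ((Finset.Icc 1 (m:ℤ)) ×ˢ (Finset.Icc (-(m:ℤ)) (m:ℤ))).filter
    (fun p => 1 + p.2 ≤ p.1 ∧ 1 - p.2 ≤ p.1 ∧ p.1 + p.2 ≤ (m:ℤ) ∧ p.1 - p.2 ≤ (m:ℤ))

lemma mem_bd {m : ℕ} {p : ℤ × ℤ} :
    p ∈ bd m ↔ (1 + p.2 ≤ p.1 ∧ 1 - p.2 ≤ p.1 ∧ p.1 + p.2 ≤ (m:ℤ) ∧ p.1 - p.2 ≤ (m:ℤ)) := by
  simp only [bd, Finset.mem_filter, Finset.mem_product, Finset.mem_Icc]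
  constructor
  · intro h; exact h.2
  · intro h; exact ⟨by omega, h⟩

lemma col0_card (m : ℕ) : ((bd m).filter (fun p => p.2 = 0)).card = m := by
  have himg : (bd m).filter (fun p => p.2 = 0)
      = (Finset.Icc (1:ℤ) (m:ℤ)).image (fun u => (u, (0:ℤ))) := by
    ext p
    simp only [Finset.mem_filter, mem_bd, Finset.mem_image, Finset.mem_Icc]
    constructor
    · rintro ⟨hc, h2⟩
      exact ⟨p.1, by omega, by rw [Prod.ext_iff]; exact ⟨rfl, h2.symm⟩⟩
    · rintro ⟨u, hu, rfl⟩
      refine ⟨by simp; omega, rfl⟩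
  rw [himg, Finset.card_image_of_injOn (by intro a _ b _ h; simpa [Prod.ext_iff] using h)]
  simp [Int.card_Icc]

lemma col1_card (m : ℕ) :
    (((bd (m+2)).filter (fun p => p.2 ≠ 0)).filter (fun p => p.2 = 1)).card = m := by
  have himg : ((bd (m+2)).filter (fun p => p.2 ≠ 0)).filter (fun p => p.2 = 1)
      = (Finset.Icc (2:ℤ) ((m:ℤ)+1)).image (fun u => (u, (1:ℤ))) := by
    ext p
    simp only [Finset.mem_filter, mem_bd, Finset.mem_image, Finset.mem_Icc]
    constructor
    · rintro ⟨⟨hc, h0⟩, h2⟩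
      refine ⟨p.1, by push_cast at hc ⊢; omega, by rw [Prod.ext_iff]; exact ⟨rfl, h2.symm⟩⟩
    · rintro ⟨u, hu, rfl⟩
      refine ⟨⟨by simp; push_cast; omega, by simp⟩, rfl⟩
  rw [himg, Finset.card_image_of_injOn (by intro a _ b _ h; simpa [Prod.ext_iff] using h)]
  simp [Int.card_Icc]
  omega

lemma hdom0 (m : ℕ) : ∀ p ∈ bd m, ((p.1, (0:ℤ)) : ℤ × ℤ) ∈ bd m := by
  intro p hp
  rw [mem_bd] at hp ⊢
  dsimp only
  omega

lemma hdom1 (m : ℕ) : ∀ p ∈ (bd (m+2)).filter (fun p => p.2 ≠ 0),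
    ((p.1, (1:ℤ)) : ℤ × ℤ) ∈ (bd (m+2)).filter (fun p => p.2 ≠ 0) := by
  intro p hp
  rw [Finset.mem_filter, mem_bd] at hp ⊢
  simp only [ne_eq] at hp ⊢
  push_cast at hp ⊢
  constructor
  · omega
  · norm_num

lemma rows_bd (m k : ℕ) (h : m < k) : (plc (bd m) k).card = 0 := by
  apply plc_card_eq_zero (bd m) (Finset.Icc (1:ℤ) (m:ℤ))
  · intro p hp
    rw [mem_bd] at hp
    rw [Finset.mem_Icc]
    omega
  · simp [Int.card_Icc]
    omega

lemma rows_B1 (m k : ℕ) (h : m < k) :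
    (plc ((bd (m+2)).filter (fun p => p.2 ≠ 0)) k).card = 0 := by
  apply plc_card_eq_zero _ (Finset.Icc (2:ℤ) ((m:ℤ)+1))
  · intro p hp
    rw [Finset.mem_filter, mem_bd] at hp
    rw [Finset.mem_Icc]
    push_cast at hp
    omega
  · simp [Int.card_Icc]
    omega

lemma shift_card (m k : ℕ) :
    (plc (((bd (m+2)).filter (fun p => p.2 ≠ 0)).filter (fun p => p.2 ≠ 1)) k).card
      = (plc (bd m) k).card := by
  unfold plc
  apply card_transfer _ _ _ _
    (fun p : ℤ × ℤ => (p.1 - 1, if 0 < p.2 then p.2 - 1 else p.2 + 1))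
  · -- hmem
    intro p hp
    simp only [Finset.mem_filter, mem_bd, ne_eq] at hp
    push_cast at hp
    rw [mem_bd]
    by_cases h : 0 < p.2 <;> simp only [h, if_true, if_false, reduceIte] <;> omega
  · -- hinj
    intro a ha b hb heq
    simp only [Finset.mem_filter, mem_bd, ne_eq] at ha hb
    rw [Prod.ext_iff] at heq ⊢
    dsimp only at heq ⊢
    constructor
    · omega
    · by_cases h1 : 0 < a.2 <;> by_cases h2 : 0 < b.2 <;>
        simp only [h1, h2, if_true, if_false, reduceIte] at heq <;> omega
  · -- hsurj
    intro q hq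
    rw [mem_bd] at hq
    refine ⟨(q.1 + 1, if 0 < q.2 then q.2 + 1 else q.2 - 1), ?_, ?_⟩
    · simp only [Finset.mem_filter, mem_bd, ne_eq]
      push_cast
      by_cases h : 0 < q.2 <;> simp only [h, if_true, if_false, reduceIte] <;>
        refine ⟨⟨?_, ?_⟩, ?_⟩ <;> omega
    · rw [Prod.ext_iff]
      dsimp only
      by_cases h : 0 < q.2
      · rw [if_pos h, if_pos (by omega)]
        omega
      · rw [if_neg h, if_neg (by omega)]
        omega
  · -- hp
    intro a ha b hb hab
    simp only [Finset.mem_filter, mem_bd, ne_eq] at ha hb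
    dsimp only
    constructor
    · rintro ⟨h1, h2⟩
      constructor
      · omega
      · by_cases ha2 : 0 < a.2 <;> by_cases hb2 : 0 < b.2 <;>
          simp only [ha2, hb2, if_true, if_false, reduceIte] <;> omega
    · rintro ⟨h1, h2⟩
      constructor
      · omega
      · by_cases ha2 : 0 < a.2 <;> by_cases hb2 : 0 < b.2 <;>
          simp only [ha2, hb2, if_true, if_false, reduceIte] at h2 <;> omega

lemma white_eq (m k : ℕ) : whiteCount m k = (plc (bd m) k).card := by
  unfold whiteCount plc
  apply card_transfer _ _ _ _
    (fun a : ℕ × ℕ => ((((a.1:ℤ) + a.2)/2 : ℤ), (((a.1:ℤ) - a.2)/2 : ℤ)))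
  · -- hmem
    intro a ha
    simp only [Finset.mem_filter, Finset.mem_product, Finset.mem_Icc, Nat.even_iff] at ha
    rw [mem_bd]
    dsimp only
    omega
  · -- hinj
    intro a ha b hb heq
    simp only [Finset.mem_filter, Finset.mem_product, Finset.mem_Icc, Nat.even_iff] at ha hb
    rw [Prod.ext_iff] at heq ⊢
    omega
  · -- hsurj
    intro q hq
    rw [mem_bd] at hq
    refine ⟨((q.1 + q.2).toNat, (q.1 - q.2).toNat), ?_, ?_⟩
    · simp only [Finset.mem_filter, Finset.mem_product, Finset.mem_Icc, Nat.even_iff]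
      omega
    · rw [Prod.ext_iff]
      dsimp only
      omega
  · -- hp
    intro a ha b hb hab
    simp only [Finset.mem_filter, Finset.mem_product, Finset.mem_Icc, Nat.even_iff] at ha hb
    dsimp only
    omega

lemma bd_one : bd 1 = {((1:ℤ), (0:ℤ))} := by
  ext p
  rw [mem_bd, Finset.mem_singleton, Prod.ext_iff]
  push_cast
  omega

lemma N11 : (plc (bd 1) 1).card = 1 := by
  rw [bd_one]
  decide

lemma T11 : T 1 1 = 1 := by decide

lemma A_eq (m : ℕ) (ihm : ∀ j, ((plc (bd m) j).card : ℕ) = T m j) :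
    ∀ k, ((plc ((bd (m+2)).filter (fun p => p.2 ≠ 0)) k).card : ℤ) = tA m k := by
  intro k
  match k with
  | 0 => rw [plc_zero]; rfl
  | k+1 =>
    have h2 := removal ((bd (m+2)).filter (fun p => p.2 ≠ 0)) 1 (hdom1 m) k
    rw [col1_card m, shift_card m (k+1), shift_card m k, ihm (k+1), ihm k] at h2
    rw [h2]
    show ((T m (k+1) + (m - k) * T m k : ℕ) : ℤ) = (T m (k+1) : ℤ) + ((m:ℤ) - k) * T m k
    rcases le_or_gt k m with h | h
    · push_cast [h]
      ring
    · rw [T_vanish m k h, Nat.sub_eq_zero_of_le h.le]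
      push_cast
      ring

lemma N_eq_T : ∀ m k, ((plc (bd m) k).card : ℕ) = T m k := by
  intro m
  induction m using Nat.strong_induction_on with
  | _ m ih =>
    match m with
    | 0 =>
      intro k
      match k with
      | 0 => rw [plc_zero, T_zero]
      | k+1 => rw [rows_bd 0 (k+1) (by omega), T_vanish 0 (k+1) (by omega)]
    | 1 =>
      intro k
      match k with
      | 0 => rw [plc_zero, T_zero]
      | 1 => rw [N11, T11]
      | k+2 => rw [rows_bd 1 (k+2) (by omega), T_vanish 1 (k+2) (by omega)]
    | m+2 =>
      intro k
      have ihm := ih m (by omega)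
      match k with
      | 0 => rw [plc_zero, T_zero]
      | k+1 =>
        have h1 := removal (bd (m+2)) 0 (hdom0 (m+2)) k
        rw [col0_card (m+2)] at h1
        have hA := A_eq m ihm
        have hcast : ((plc (bd (m+2)) (k+1)).card : ℤ)
            = tA m (k+1) + ((m:ℤ)+2-k) * tA m k := by
          rw [h1]
          rcases le_or_gt k (m+2) with h | h
          · push_cast [h]
            rw [hA (k+1), hA k]
          · rw [Nat.sub_eq_zero_of_le h.le]
            have hz2 : tA m k = 0 := tA_vanish m k (by omega)
            push_cast
            rw [hA (k+1), hz2]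
            ring
        have hfin : ((plc (bd (m+2)) (k+1)).card : ℤ) = (T (m+2) (k+1) : ℤ) := by
          rw [hcast, ← alg_succ m k]
        exact_mod_cast hfin

/-- Closed form for nonattacking bishop placements on the white squares. -/
theorem white_bishop_closed_form (m k : ℕ) :
    whiteCount m k =
      ∑ j ∈ Finset.range (k + 1),
        Nat.choose ((m + 1) / 2) j * stirlingZ (m - j) ((m : ℤ) - k) := by
  rw [white_eq m k, N_eq_T m k]
  rfl
end

section
/- For all integers m and k with 0 ≤ k ≤ m, k! · R_W(m, m−k) = ∑_{j=0}^{k} (−1)^{k−j} · C(k,j) · (j+1)^{⌈m/2⌉} · j^{⌊m/2⌋}, where 0^0 = 1. -/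
open Finset

attribute [local instance] Classical.propDecidable

lemma chain_card (T : ℕ → Finset ℕ) (hT : ∀ i j, i ≤ j → T i ⊆ T j) : ∀ (n : ℕ),
    (((Fintype.piFinset fun i : Fin n => T i)).filter fun f => Function.Injective f).card
      = ∏ i ∈ range n, ((T i).card - i)
  | 0 => by
    simp [Fintype.piFinset, Function.Injective]
  | (n+1) => by
    classical
    have key : ∀ f₀ ∈ ((Fintype.piFinset fun i : Fin n => T i)).filter
        fun f => Function.Injective f,
        ((((Fintype.piFinset fun i : Fin (n+1) => T i)).filter fun f => Function.Injective f).filter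
          (fun f => Fin.init f = f₀)).card = (T n).card - n := by
      intro f₀ hf₀
      simp only [mem_filter, Fintype.mem_piFinset] at hf₀
      obtain ⟨hmem, hinj⟩ := hf₀
      have himg : (univ.image f₀) ⊆ T n := by
        intro y hy
        simp only [mem_image] at hy
        obtain ⟨i, _, rfl⟩ := hy
        exact hT i n (le_of_lt i.2) (hmem i)
      have hcard : ((T n) \ (univ.image f₀)).card = (T n).card - n := by
        rw [card_sdiff_of_subset himg, Finset.card_image_of_injective _ hinj, card_univ, Fintype.card_fin]
      rw [← hcard]
      apply Finset.card_bij (fun f _ => f (Fin.last n))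
      · intro f hf
        simp only [mem_filter, Fintype.mem_piFinset] at hf
        obtain ⟨⟨hf1, hf2⟩, hf3⟩ := hf
        simp only [mem_sdiff, mem_image]
        constructor
        · simpa using hf1 (Fin.last n)
        · rintro ⟨i, -, hi⟩
          subst hf3
          exact absurd (hf2 hi) (by simp [Fin.init, Fin.ext_iff]; omega)
      · intro f hf g hg hfg
        simp only [mem_filter] at hf hg
        rw [← Fin.snoc_init_self f, ← Fin.snoc_init_self g, hf.2, hg.2, hfg]
      · intro y hy
        simp only [mem_sdiff, mem_image] at hy
        refine ⟨Fin.snoc f₀ y, ?_, by simp⟩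
        simp only [mem_filter, Fintype.mem_piFinset]
        refine ⟨⟨?_, ?_⟩, by simp [Fin.init_snoc]⟩
        · intro i
          induction i using Fin.lastCases with
          | last => simpa using hy.1
          | cast j => simpa [Fin.snoc_castSucc] using hmem j
        · intro a b hab
          induction a using Fin.lastCases with
          | last =>
            induction b using Fin.lastCases with
            | last => rfl
            | cast b =>
              exfalso
              rw [Fin.snoc_last, Fin.snoc_castSucc] at hab
              exact hy.2 ⟨b, mem_univ b, hab.symm⟩
          | cast a =>
            induction b using Fin.lastCases with
            | last =>
              exfalso
              rw [Fin.snoc_last, Fin.snoc_castSucc] at hab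
              exact hy.2 ⟨a, mem_univ a, hab⟩
            | cast b =>
              rw [Fin.snoc_castSucc, Fin.snoc_castSucc] at hab
              exact congrArg Fin.castSucc (hinj hab)
    rw [Finset.card_eq_sum_card_fiberwise (f := fun f => Fin.init f)
      (t := ((Fintype.piFinset fun i : Fin n => T i)).filter fun f => Function.Injective f) ?_,
      Finset.sum_congr rfl key, sum_const, smul_eq_mul, chain_card T hT n,
      prod_range_succ]
    intro f hf
    simp only [Finset.mem_coe, mem_filter, Fintype.mem_piFinset] at hf ⊢
    exact ⟨fun i => hf.1 i.castSucc, fun a b hab => Fin.castSucc_injective n (hf.2 hab)⟩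

attribute [local instance] Classical.propDecidable

/-- column absolute diagonal value -/
def adm (m i : ℕ) : ℕ := (m - i - (m + i) % 2) / 2
/-- row set of column i -/
def rowS (m i : ℕ) : Finset ℕ := Finset.Icc (adm m i + 1) (m - adm m i)
def extS (m x : ℕ) : Finset ℕ := Finset.Icc (m + 1) (m + x)
def colT (m x i : ℕ) : Finset ℕ := rowS m i ∪ extS m x
def okP (P : Finset (ℕ × ℕ)) : Prop :=
  ∀ a ∈ P, ∀ b ∈ P, a ≠ b → a.1 ≠ b.1 ∧ a.2 ≠ b.2
def board (m : ℕ) : Finset (ℕ × ℕ) :=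
  (Finset.range m ×ˢ Finset.Icc 1 m).filter (fun c => c.2 ∈ rowS m c.1)
noncomputable def W (m t : ℕ) : ℕ := (((board m).powersetCard t).filter okP).card
noncomputable def NN (m x : ℕ) : ℕ :=
  ((Fintype.piFinset fun i : Fin m => colT m x i).filter fun f => Function.Injective f).card

lemma adm_eq (m i : ℕ) (h : i < m) : m - 2 * adm m i = i + (m + i) % 2 := by
  unfold adm; omega

lemma rowS_card (m i : ℕ) : (rowS m i).card = m - 2 * adm m i := by
  rw [rowS, Nat.card_Icc]; omega

lemma rowS_subset (m i : ℕ) : rowS m i ⊆ Finset.Icc 1 m := by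
  apply Icc_subset_Icc <;> omega

lemma rowS_mono (m : ℕ) {i j : ℕ} (h : i ≤ j) : rowS m i ⊆ rowS m j := by
  apply Icc_subset_Icc <;> unfold adm <;> omega

lemma colT_mono (m x : ℕ) : ∀ i j, i ≤ j → colT m x i ⊆ colT m x j := fun i j h =>
  union_subset_union (rowS_mono m h) (Subset.refl _)

lemma colT_card (m x i : ℕ) (h : i < m) : (colT m x i).card = i + (m + i) % 2 + x := by
  rw [colT, card_union_of_disjoint, rowS_card, extS, Nat.card_Icc, adm_eq m i h]
  · omega
  · rw [Finset.disjoint_left]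
    intro a ha hb
    have h1 := rowS_subset m i ha
    simp only [mem_Icc, extS] at h1 hb
    omega

lemma count_mod (r : ℕ) (hr : r ≤ 1) : ∀ n : ℕ,
    ((range n).filter (fun i => i % 2 = r)).card = (n + 1 - r) / 2
  | 0 => by simp; omega
  | (n+1) => by
    rw [range_add_one, filter_insert]
    have ih := count_mod r hr n
    split
    · rw [card_insert_of_notMem (by simp)]; omega
    · omega

lemma parity_count (m : ℕ) :
    ((range m).filter (fun i => (m + i) % 2 = 1)).card = (m + 1) / 2 := by
  have : ((range m).filter (fun i => (m + i) % 2 = 1))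
      = ((range m).filter (fun i => i % 2 = (m+1) % 2)) := by
    apply filter_congr
    intro i _
    omega
  rw [this, count_mod ((m+1) % 2) (by omega) m]
  omega

lemma NN_eq_pow (m x : ℕ) : NN m x = (x + 1) ^ ((m + 1) / 2) * x ^ (m / 2) := by
  rw [NN, chain_card (colT m x) (colT_mono m x) m]
  have h1 : ∀ i ∈ range m, (colT m x i).card - i = x + (m + i) % 2 := by
    intro i hi
    rw [colT_card m x i (mem_range.mp hi)]
    omega
  rw [prod_congr rfl h1, ← prod_filter_mul_prod_filter_not (range m) (fun i => (m + i) % 2 = 1)]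
  have h2 : ∀ i ∈ (range m).filter (fun i => (m + i) % 2 = 1), x + (m + i) % 2 = x + 1 := by
    intro i hi; rw [(mem_filter.mp hi).2]
  have h3 : ∀ i ∈ (range m).filter (fun i => ¬ (m + i) % 2 = 1), x + (m + i) % 2 = x := by
    intro i hi
    have := (mem_filter.mp hi).2
    omega
  rw [prod_congr rfl h2, prod_congr rfl h3, prod_const, prod_const, parity_count]
  congr 1
  have h4 := card_filter_add_card_filter_not (s := range m)
    (p := fun i => (m + i) % 2 = 1)
  rw [parity_count, card_range] at h4
  congr 1
  omega

noncomputable def boardPart (m : ℕ) (f : Fin m → ℕ) : Finset (ℕ × ℕ) :=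
  ((univ : Finset (Fin m)).image (fun i : Fin m => ((i : ℕ), f i))).filter (fun c => c.2 ≤ m)

lemma mem_boardPart {m : ℕ} {f : Fin m → ℕ} {q : ℕ × ℕ} :
    q ∈ boardPart m f ↔ ∃ i : Fin m, q = ((i : ℕ), f i) ∧ f i ≤ m := by
  simp only [boardPart, mem_filter, mem_image, mem_univ, true_and]
  constructor
  · rintro ⟨⟨i, hi⟩, h2⟩
    subst hi
    exact ⟨i, rfl, h2⟩
  · rintro ⟨i, rfl, h⟩
    exact ⟨⟨i, rfl⟩, h⟩

lemma extS_large {m x a : ℕ} (h : a ∈ extS m x) : m + 1 ≤ a := by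
  simp only [extS, mem_Icc] at h; exact h.1

lemma rowS_le {m i a : ℕ} (h : a ∈ rowS m i) : 1 ≤ a ∧ a ≤ m := by
  have := rowS_subset m i h; simpa using this

lemma mem_board_iff {m : ℕ} {q : ℕ × ℕ} :
    q ∈ board m ↔ q.1 < m ∧ q.2 ∈ rowS m q.1 := by
  simp only [board, mem_filter, mem_product, mem_range, mem_Icc]
  constructor
  · rintro ⟨⟨h1, _⟩, h3⟩; exact ⟨h1, h3⟩
  · rintro ⟨h1, h2⟩; exact ⟨⟨h1, rowS_le h2⟩, h2⟩

lemma boardPart_mem {m x : ℕ} {f : Fin m → ℕ}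
    (hf : f ∈ ((Fintype.piFinset fun i : Fin m => colT m x i).filter fun f => Function.Injective f)) :
    boardPart m f ∈ ((board m).powerset).filter okP := by
  simp only [mem_filter, Fintype.mem_piFinset] at hf
  obtain ⟨hmem, hinj⟩ := hf
  rw [mem_filter, mem_powerset]
  constructor
  · intro q hq
    rw [mem_boardPart] at hq
    obtain ⟨i, rfl, h3⟩ := hq
    rw [mem_board_iff]
    refine ⟨i.2, ?_⟩
    have := hmem i
    rw [colT, mem_union] at this
    rcases this with h | h
    · exact h
    · exact absurd (extS_large h) (by omega)
  · intro a ha b hb hab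
    rw [mem_boardPart] at ha hb
    obtain ⟨i, rfl, hi3⟩ := ha
    obtain ⟨j, rfl, hj3⟩ := hb
    constructor
    · intro h
      apply hab
      have : i = j := Fin.ext (by exact_mod_cast h)
      rw [this]
    · intro h
      apply hab
      have : i = j := hinj h
      rw [this]

noncomputable def pin (P : Finset (ℕ × ℕ)) (i : ℕ) : ℕ :=
  (P.filter (fun q => q.1 = i)).sum Prod.snd

lemma pin_eq {P : Finset (ℕ × ℕ)} (hP : okP P) {i s : ℕ} (h : (i, s) ∈ P) : pin P i = s := by
  have : P.filter (fun q => q.1 = i) = {(i, s)} := by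
    ext q
    simp only [mem_filter, mem_singleton]
    constructor
    · rintro ⟨hq, hq1⟩
      by_contra hne
      exact (hP q hq (i, s) h hne).1 hq1
    · rintro rfl
      exact ⟨h, rfl⟩
  rw [pin, this, sum_singleton]

lemma pin_mem {P : Finset (ℕ × ℕ)} (hP : okP P) {i : ℕ} (hi : i ∈ P.image Prod.fst) :
    (i, pin P i) ∈ P := by
  rw [mem_image] at hi
  obtain ⟨q, hq, rfl⟩ := hi
  have hq' : (q.1, q.2) ∈ P := by simpa using hq
  rw [pin_eq hP hq']
  exact hq'

lemma extS_card (m x : ℕ) : (extS m x).card = x := by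
  rw [extS, Nat.card_Icc]; omega

lemma fiber_card (m x : ℕ) (P : Finset (ℕ × ℕ)) (hPb : P ⊆ board m) (hP : okP P) :
    ((((Fintype.piFinset fun i : Fin m => colT m x i)).filter fun f => Function.Injective f).filter
      (fun f => boardPart m f = P)).card = Nat.descFactorial x (m - P.card) := by
  classical
  set cols := P.image Prod.fst with hcols
  set free := (univ : Finset (Fin m)).filter (fun i : Fin m => (i : ℕ) ∉ cols) with hfree
  have hcolsP : cols.card = P.card := by
    apply card_image_of_injOn
    intro a ha b hb hab
    by_contra hne
    exact (hP a ha b hb hne).1 hab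
  have hcols_sub : ∀ c ∈ cols, c < m := by
    intro c hc
    rw [mem_image] at hc
    obtain ⟨q, hq, rfl⟩ := hc
    exact (mem_board_iff.mp (hPb hq)).1
  have hfree_card : free.card = m - P.card := by
    have h1 : ((univ : Finset (Fin m)).filter (fun i : Fin m => (i : ℕ) ∈ cols)).card = cols.card := by
      apply card_bij (fun (i : Fin m) (_ : i ∈ (univ : Finset (Fin m)).filter (fun i : Fin m => (i : ℕ) ∈ cols)) => (i : ℕ))
      · intro a ha; exact (mem_filter.mp ha).2
      · intro a _ b _ hab; exact Fin.ext hab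
      · intro c hc
        exact ⟨⟨c, hcols_sub c hc⟩, mem_filter.mpr ⟨mem_univ _, hc⟩, rfl⟩
    have h2 : free = univ \ ((univ : Finset (Fin m)).filter (fun i : Fin m => (i : ℕ) ∈ cols)) := by
      rw [hfree, filter_not]
    rw [h2, card_sdiff_of_subset (filter_subset _ _), h1, card_univ, Fintype.card_fin, hcolsP]
  set r := free.card with hrdef
  have hext : ∀ i : Fin m, extS m x ⊆ colT m x (i : ℕ) := fun i => subset_union_right
  set ord := free.orderIsoOfFin rfl with hord
  rw [← hfree_card]
  have htarget : Nat.descFactorial x r =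
      ((Fintype.piFinset fun _ : Fin r => extS m x).filter fun g => Function.Injective g).card := by
    rw [chain_card (fun _ => extS m x) (fun _ _ _ => Subset.refl _) r,
      Nat.descFactorial_eq_prod_range]
    apply prod_congr rfl
    intro j _
    rw [extS_card]
  rw [htarget]
  apply card_bij' (fun f _ => fun j : Fin r => f (ord j))
    (fun g _ => fun i : Fin m => if h : i ∈ free then g (ord.symm ⟨i, h⟩) else pin P (i : ℕ))
  -- hi : forward maps into target
  · intro f hf
    simp only [mem_filter, Fintype.mem_piFinset] at hf
    obtain ⟨⟨hmem, hinj⟩, hbp⟩ := hf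
    have hfree_ext : ∀ i : Fin m, i ∈ free → f i ∈ extS m x := by
      intro i hi
      have h1 := hmem i
      rw [colT, mem_union] at h1
      rcases h1 with h1 | h1
      · exfalso
        have h2 : ((i : ℕ), f i) ∈ boardPart m f :=
          mem_boardPart.mpr ⟨i, rfl, (rowS_le h1).2⟩
        rw [hbp] at h2
        have : (i : ℕ) ∈ cols := mem_image_of_mem Prod.fst h2
        exact (mem_filter.mp hi).2 this
      · exact h1
    simp only [mem_filter, Fintype.mem_piFinset]
    constructor
    · intro j
      exact hfree_ext _ (ord j).2
    · intro a b hab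
      have := hinj hab
      have h2 : (ord a : Fin m) = ord b := this
      exact ord.injective (Subtype.ext h2)
  -- hj : backward maps into fiber
  · intro g hg
    simp only [mem_filter, Fintype.mem_piFinset] at hg
    obtain ⟨hgmem, hginj⟩ := hg
    have hpin : ∀ i : Fin m, i ∉ free → ((i : ℕ), pin P (i : ℕ)) ∈ P := by
      intro i hi
      apply pin_mem hP
      simp only [hfree, mem_filter, mem_univ, true_and, not_not] at hi
      exact hi
    have hpin_row : ∀ i : Fin m, i ∉ free → pin P (i : ℕ) ∈ rowS m (i : ℕ) := by
      intro i hi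
      exact (mem_board_iff.mp (hPb (hpin i hi))).2
    simp only [mem_filter, Fintype.mem_piFinset]
    refine ⟨⟨?_, ?_⟩, ?_⟩
    · intro i
      by_cases h : i ∈ free
      · rw [dif_pos h]
        exact hext i (hgmem _)
      · rw [dif_neg h, colT, mem_union]
        exact Or.inl (hpin_row i h)
    · intro a b hab
      beta_reduce at hab
      by_cases ha : a ∈ free <;> by_cases hb : b ∈ free
      · rw [dif_pos ha, dif_pos hb] at hab
        have := hginj hab
        have h2 := congrArg (fun z => ((ord.symm.symm z : {y // y ∈ free}) : Fin m)) this
        simpa using congrArg (fun z => ((ord z : {y // y ∈ free}) : Fin m)) this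
      · exfalso
        rw [dif_pos ha, dif_neg hb] at hab
        have h1 := extS_large (hgmem (ord.symm ⟨a, ha⟩))
        have h2 := (rowS_le (hpin_row b hb)).2
        omega
      · exfalso
        rw [dif_neg ha, dif_pos hb] at hab
        have h1 := extS_large (hgmem (ord.symm ⟨b, hb⟩))
        have h2 := (rowS_le (hpin_row a ha)).2
        omega
      · rw [dif_neg ha, dif_neg hb] at hab
        by_contra hne
        have hne' : ((a : ℕ), pin P (a : ℕ)) ≠ ((b : ℕ), pin P (b : ℕ)) := by
          intro h
          apply hne
          exact Fin.ext (congrArg Prod.fst h)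
        exact (hP _ (hpin a ha) _ (hpin b hb) hne').2 hab
    · -- boardPart = P
      ext q
      rw [mem_boardPart]
      constructor
      · rintro ⟨i, rfl, hle⟩
        beta_reduce at hle
        by_cases h : i ∈ free
        · exfalso
          rw [dif_pos h] at hle
          have := extS_large (hgmem (ord.symm ⟨i, h⟩))
          omega
        · rw [dif_neg h]
          exact hpin i h
      · intro hq
        have hq1 : q.1 < m := (mem_board_iff.mp (hPb hq)).1
        set i : Fin m := ⟨q.1, hq1⟩ with hi
        have hnf : i ∉ free := by
          simp only [hfree, mem_filter, mem_univ, true_and, not_not]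
          exact mem_image_of_mem Prod.fst hq
        have hpq : pin P q.1 = q.2 := pin_eq hP (by rw [Prod.mk.eta]; exact hq)
        refine ⟨i, ?_, ?_⟩
        · simp only [dif_neg hnf]
          rw [hpq, Prod.mk.eta]
        · simp only [dif_neg hnf]
          rw [hpq]
          exact (rowS_le (mem_board_iff.mp (hPb hq)).2).2
  -- left inverse
  · intro f hf
    simp only [mem_filter, Fintype.mem_piFinset] at hf
    obtain ⟨⟨hmem, hinj⟩, hbp⟩ := hf
    funext i
    beta_reduce
    by_cases h : i ∈ free
    · simp only [dif_pos h]
      have : ((ord (ord.symm ⟨i, h⟩) : {y // y ∈ free}) : Fin m) = i :=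
        congrArg Subtype.val (ord.apply_symm_apply ⟨i, h⟩)
      rw [this]
    · simp only [dif_neg h]
      have hi : (i : ℕ) ∈ cols := by
        simp only [hfree, mem_filter, mem_univ, true_and, not_not] at h
        exact h
      have h1 : ((i : ℕ), pin P (i : ℕ)) ∈ P := pin_mem hP hi
      have h1' : ((i : ℕ), pin P (i : ℕ)) ∈ boardPart m f := by rw [hbp]; exact h1
      rw [mem_boardPart] at h1'
      obtain ⟨i', heq, -⟩ := h1'
      have : i' = i := Fin.ext (congrArg Prod.fst heq).symm
      subst this
      exact congrArg Prod.snd heq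
  -- right inverse
  · intro g hg
    funext j
    beta_reduce
    rw [dif_pos (ord j).2]
    congr 1
    rw [show (⟨((ord j : {y // y ∈ free}) : Fin m), (ord j).2⟩ : {y // y ∈ free}) = ord j from rfl]
    exact ord.symm_apply_apply j

lemma okP_card_le {m : ℕ} {P : Finset (ℕ × ℕ)} (hPb : P ⊆ board m) (hP : okP P) :
    P.card ≤ m := by
  have h1 : (P.image Prod.fst).card = P.card := by
    apply card_image_of_injOn
    intro a ha b hb hab
    by_contra hne
    exact (hP a ha b hb hne).1 hab
  have h2 : P.image Prod.fst ⊆ range m := by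
    intro c hc
    rw [mem_image] at hc
    obtain ⟨q, hq, rfl⟩ := hc
    exact mem_range.mpr (mem_board_iff.mp (hPb hq)).1
  calc P.card = (P.image Prod.fst).card := h1.symm
    _ ≤ (range m).card := card_le_card h2
    _ = m := card_range m

lemma NN_eq_sum (m x : ℕ) :
    NN m x = ∑ t ∈ range (m + 1), W m t * Nat.descFactorial x (m - t) := by
  classical
  rw [NN, card_eq_sum_card_fiberwise (f := boardPart m)
    (t := ((board m).powerset).filter okP) (fun f hf => boardPart_mem hf)]
  have step1 : ∑ P ∈ ((board m).powerset).filter okP,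
      ((((Fintype.piFinset fun i : Fin m => colT m x i)).filter fun f =>
        Function.Injective f).filter (fun f => boardPart m f = P)).card
      = ∑ P ∈ ((board m).powerset).filter okP, Nat.descFactorial x (m - P.card) := by
    apply sum_congr rfl
    intro P hP
    rw [mem_filter, mem_powerset] at hP
    exact fiber_card m x P hP.1 hP.2
  rw [step1, ← sum_fiberwise_of_maps_to (g := fun P : Finset (ℕ × ℕ) => P.card)
    (t := range (m + 1)) (fun P hP => ?_)]
  rotate_left
  · rw [mem_filter, mem_powerset] at hP
    exact mem_range.mpr (Nat.lt_succ_of_le (okP_card_le hP.1 hP.2))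
  apply Finset.sum_congr rfl
  intro t _
  have h1 : ∀ P ∈ (((board m).powerset).filter okP).filter (fun P => P.card = t),
      Nat.descFactorial x (m - P.card) = Nat.descFactorial x (m - t) := by
    intro P hP
    rw [(mem_filter.mp hP).2]
  rw [Finset.sum_congr rfl h1, sum_const, smul_eq_mul]
  congr 1
  rw [W, powersetCard_eq_filter, filter_comm]

def whiteSq (m : ℕ) : Finset (ℕ × ℕ) :=
  (Finset.Icc 1 m ×ˢ Finset.Icc 1 m).filter (fun a => Even (a.1 + a.2))

lemma mem_whiteSq {m : ℕ} {a : ℕ × ℕ} :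
    a ∈ whiteSq m ↔ 1 ≤ a.1 ∧ a.1 ≤ m ∧ 1 ≤ a.2 ∧ a.2 ≤ m ∧ (a.1 + a.2) % 2 = 0 := by
  simp only [whiteSq, mem_filter, mem_product, mem_Icc, Nat.even_iff]
  omega

def colIdx (m : ℕ) (a : ℕ × ℕ) : ℕ :=
  if a.2 < a.1 then m - (a.1 - a.2) else m - 1 - (a.2 - a.1)

def phi (m : ℕ) (a : ℕ × ℕ) : ℕ × ℕ := (colIdx m a, (a.1 + a.2) / 2)

def psi (m : ℕ) (c : ℕ × ℕ) : ℕ × ℕ :=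
  if (m + c.1) % 2 = 0 then (c.2 + adm m c.1, c.2 - adm m c.1)
  else (c.2 - adm m c.1, c.2 + adm m c.1)

lemma mem_board_iff' {m : ℕ} {c : ℕ × ℕ} :
    c ∈ board m ↔ c.1 < m ∧ adm m c.1 + 1 ≤ c.2 ∧ c.2 ≤ m - adm m c.1 := by
  rw [mem_board_iff, rowS, mem_Icc]

lemma phi_mem_board {m : ℕ} {a : ℕ × ℕ} (ha : a ∈ whiteSq m) : phi m a ∈ board m := by
  rw [mem_whiteSq] at ha
  rw [mem_board_iff']
  obtain ⟨a1, a2⟩ := a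
  simp only [phi, colIdx, adm] at *
  split_ifs <;> omega

lemma psi_phi {m : ℕ} {a : ℕ × ℕ} (ha : a ∈ whiteSq m) : psi m (phi m a) = a := by
  rw [mem_whiteSq] at ha
  obtain ⟨a1, a2⟩ := a
  simp only [phi, psi, colIdx, adm] at *
  split_ifs <;> (rw [Prod.mk.injEq]; constructor <;> omega)

lemma psi_mem_whiteSq {m : ℕ} {c : ℕ × ℕ} (hc : c ∈ board m) : psi m c ∈ whiteSq m := by
  rw [mem_board_iff'] at hc
  rw [mem_whiteSq]
  obtain ⟨c1, c2⟩ := c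
  simp only [psi, adm] at *
  split_ifs <;> simp only [] <;> omega

lemma phi_psi {m : ℕ} {c : ℕ × ℕ} (hc : c ∈ board m) : phi m (psi m c) = c := by
  rw [mem_board_iff'] at hc
  obtain ⟨c1, c2⟩ := c
  simp only [phi, psi, colIdx, adm] at *
  split_ifs <;> (rw [Prod.mk.injEq]; constructor <;> omega)

lemma colIdx_eq_iff {m : ℕ} {a b : ℕ × ℕ} (ha : a ∈ whiteSq m) (hb : b ∈ whiteSq m) :
    colIdx m a = colIdx m b ↔ (a.1 : ℤ) - a.2 = (b.1 : ℤ) - b.2 := by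
  rw [mem_whiteSq] at ha hb
  obtain ⟨a1, a2⟩ := a
  obtain ⟨b1, b2⟩ := b
  simp only [colIdx] at *
  split_ifs <;> omega

lemma sumhalf_eq_iff {m : ℕ} {a b : ℕ × ℕ} (ha : a ∈ whiteSq m) (hb : b ∈ whiteSq m) :
    (a.1 + a.2) / 2 = (b.1 + b.2) / 2 ↔ a.1 + a.2 = b.1 + b.2 := by
  rw [mem_whiteSq] at ha hb
  omega

lemma image_id_of {α : Type*} [DecidableEq α] (s : Finset α) (f : α → α)
    (h : ∀ a ∈ s, f a = a) : s.image f = s := by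
  rw [Finset.image_congr (g := id) h, image_id]

def wcond (P : Finset (ℕ × ℕ)) : Prop := ∀ a ∈ P, ∀ b ∈ P, a ≠ b →
  a.1 + a.2 ≠ b.1 + b.2 ∧ (a.1 : ℤ) - a.2 ≠ (b.1 : ℤ) - b.2

lemma W_eq_wc (m t : ℕ) : (((whiteSq m).powersetCard t).filter wcond).card = W m t := by
  classical
  rw [W]
  apply card_bij (fun P _ => P.image (phi m))
  · intro P hP
    rw [mem_filter, mem_powersetCard] at hP
    obtain ⟨⟨hsub, hcard⟩, hcond⟩ := hP
    have hinj : ∀ a ∈ P, ∀ b ∈ P, phi m a = phi m b → a = b := by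
      intro a ha b hb hab
      rw [← psi_phi (hsub ha), hab, psi_phi (hsub hb)]
    rw [mem_filter, mem_powersetCard]
    refine ⟨⟨?_, ?_⟩, ?_⟩
    · intro q hq
      rw [mem_image] at hq
      obtain ⟨a, ha, rfl⟩ := hq
      exact phi_mem_board (hsub ha)
    · rw [card_image_of_injOn hinj, hcard]
    · intro q hq q' hq' hne
      rw [mem_image] at hq hq'
      obtain ⟨a, ha, rfl⟩ := hq
      obtain ⟨b, hb, rfl⟩ := hq'
      have hab : a ≠ b := fun h => hne (by rw [h])
      obtain ⟨hsum, hdiff⟩ := hcond a ha b hb hab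
      constructor
      · show colIdx m a ≠ colIdx m b
        rw [Ne, colIdx_eq_iff (hsub ha) (hsub hb)]
        exact hdiff
      · show (a.1 + a.2) / 2 ≠ (b.1 + b.2) / 2
        rw [Ne, sumhalf_eq_iff (hsub ha) (hsub hb)]
        exact hsum
  · intro P hP P' hP' h
    rw [mem_filter, mem_powersetCard] at hP hP'
    have e1 : P = (P.image (phi m)).image (psi m) := by
      rw [image_image]
      exact (image_id_of P _ (fun a ha => psi_phi (hP.1.1 ha))).symm
    have e2 : P' = (P'.image (phi m)).image (psi m) := by
      rw [image_image]
      exact (image_id_of P' _ (fun a ha => psi_phi (hP'.1.1 ha))).symm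
    rw [e1, e2, h]
  · intro Q hQ
    rw [mem_filter, mem_powersetCard] at hQ
    obtain ⟨⟨hsub, hcard⟩, hok⟩ := hQ
    have hpp : ∀ q ∈ Q, phi m (psi m q) = q := fun q hq => phi_psi (hsub hq)
    refine ⟨Q.image (psi m), ?_, ?_⟩
    · rw [mem_filter, mem_powersetCard]
      have hinj : ∀ a ∈ Q, ∀ b ∈ Q, psi m a = psi m b → a = b := by
        intro a ha b hb hab
        rw [← hpp a ha, hab, hpp b hb]
      refine ⟨⟨?_, ?_⟩, ?_⟩
      · intro a ha
        rw [mem_image] at ha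
        obtain ⟨q, hq, rfl⟩ := ha
        exact psi_mem_whiteSq (hsub hq)
      · rw [card_image_of_injOn hinj, hcard]
      · intro a ha b hb hne
        rw [mem_image] at ha hb
        obtain ⟨q, hq, rfl⟩ := ha
        obtain ⟨q', hq', rfl⟩ := hb
        have hqq : q ≠ q' := fun h => hne (by rw [h])
        obtain ⟨h1, h2⟩ := hok q hq q' hq' hqq
        have hw := psi_mem_whiteSq (hsub hq)
        have hw' := psi_mem_whiteSq (hsub hq')
        constructor
        · intro h
          apply h2
          have e1 := congrArg Prod.snd (hpp q hq)
          have e2 := congrArg Prod.snd (hpp q' hq')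
          rw [← e1, ← e2]
          show ((psi m q).1 + (psi m q).2) / 2 = ((psi m q').1 + (psi m q').2) / 2
          rw [h]
        · intro h
          apply h1
          have e1 := congrArg Prod.fst (hpp q hq)
          have e2 := congrArg Prod.fst (hpp q' hq')
          rw [← e1, ← e2]
          show colIdx m (psi m q) = colIdx m (psi m q')
          rw [colIdx_eq_iff hw hw']
          exact h
    · rw [image_image]
      exact image_id_of Q _ (fun q hq => hpp q hq)

lemma alt_sum_neg (n : ℕ) :
    ∑ i ∈ range (n + 1), (-1 : ℤ) ^ (n - i) * (Nat.choose n i : ℤ)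
      = if n = 0 then 1 else 0 := by
  have h : ∀ i ∈ range (n + 1), (-1 : ℤ) ^ (n - i) * (Nat.choose n i : ℤ)
      = (-1 : ℤ) ^ n * ((-1 : ℤ) ^ i * (Nat.choose n i : ℤ)) := by
    intro i hi
    rw [mem_range] at hi
    have h1 : (-1 : ℤ) ^ (n - i) * (-1 : ℤ) ^ i = (-1 : ℤ) ^ n := by
      rw [← pow_add]
      congr 1
      omega
    have key : (-1 : ℤ) ^ (n - i) = (-1 : ℤ) ^ n * (-1 : ℤ) ^ i := by
      have h2 : (-1 : ℤ) ^ i * (-1 : ℤ) ^ i = 1 := by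
        rw [← pow_add]
        exact Even.neg_one_pow ⟨i, rfl⟩
      have h3 : (-1 : ℤ) ^ (n - i) * ((-1 : ℤ) ^ i * (-1 : ℤ) ^ i)
          = (-1 : ℤ) ^ n * (-1 : ℤ) ^ i := by
        rw [← mul_assoc, h1]
      rw [h2, mul_one] at h3
      exact h3
    rw [key]
    ring
  rw [sum_congr rfl h, ← mul_sum, Int.alternating_sum_range_choose]
  split_ifs with h0
  · subst h0; norm_num
  · ring

lemma alt_sum (k p : ℕ) :
    ∑ j ∈ range (k + 1), (-1 : ℤ) ^ (k - j) * (Nat.choose k j : ℤ) *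
      (Nat.descFactorial j p : ℤ) = if p = k then (Nat.factorial k : ℤ) else 0 := by
  by_cases hpk : k < p
  · have hz : ∀ j ∈ range (k + 1), (-1 : ℤ) ^ (k - j) * (Nat.choose k j : ℤ) *
        (Nat.descFactorial j p : ℤ) = 0 := by
      intro j hj
      rw [mem_range] at hj
      have : Nat.descFactorial j p = 0 := by
        apply Nat.descFactorial_eq_zero_iff_lt.mpr
        omega
      rw [this]
      norm_num
    rw [sum_congr rfl hz, sum_const_zero, if_neg (by omega)]
  push_neg at hpk
  have hsub : ∑ j ∈ range (k + 1), (-1 : ℤ) ^ (k - j) * (Nat.choose k j : ℤ) *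
      (Nat.descFactorial j p : ℤ)
      = ∑ j ∈ Ico p (k + 1), (-1 : ℤ) ^ (k - j) * (Nat.choose k j : ℤ) *
      (Nat.descFactorial j p : ℤ) := by
    symm
    apply sum_subset
    · intro j hj
      rw [mem_Ico] at hj
      rw [mem_range]
      omega
    · intro j hj hj'
      rw [mem_range] at hj
      rw [mem_Ico] at hj'
      have : Nat.descFactorial j p = 0 := Nat.descFactorial_eq_zero_iff_lt.mpr (by omega)
      rw [this]
      norm_num
  rw [hsub, Finset.sum_Ico_eq_sum_range]
  have hterm : ∀ i ∈ range (k + 1 - p), (-1 : ℤ) ^ (k - (p + i)) * (Nat.choose k (p + i) : ℤ) *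
      (Nat.descFactorial (p + i) p : ℤ)
      = ((Nat.factorial p : ℤ) * (Nat.choose k p : ℤ)) *
        ((-1 : ℤ) ^ ((k - p) - i) * (Nat.choose (k - p) i : ℤ)) := by
    intro i hi
    rw [mem_range] at hi
    have h1 : Nat.descFactorial (p + i) p = Nat.factorial p * Nat.choose (p + i) p :=
      Nat.descFactorial_eq_factorial_mul_choose _ _
    have h2 : Nat.choose k (p + i) * Nat.choose (p + i) p
        = Nat.choose k p * Nat.choose (k - p) (p + i - p) :=
      Nat.choose_mul (by omega)
    have h3 : p + i - p = i := by omega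
    rw [h3] at h2
    have h4 : k - (p + i) = (k - p) - i := by omega
    rw [h1, h4]
    have h2' : (Nat.choose k (p + i) : ℤ) * (Nat.choose (p + i) p : ℤ)
        = (Nat.choose k p : ℤ) * (Nat.choose (k - p) i : ℤ) := by exact_mod_cast h2
    push_cast
    linear_combination ((-1 : ℤ) ^ (k - p - i) * (Nat.factorial p : ℤ)) * h2'
  rw [sum_congr rfl hterm, ← mul_sum]
  have h5 : k + 1 - p = (k - p) + 1 := by omega
  rw [h5, alt_sum_neg (k - p)]
  split_ifs with h6 h7 h7
  · subst h7
    simp [Nat.choose_self]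
  · omega
  · omega
  · ring

lemma whiteCount_eq_wc (m t : ℕ) :
    whiteCount m t = (((whiteSq m).powersetCard t).filter wcond).card := by
  unfold whiteCount whiteSq wcond
  congr 1
  congr 1 <;> first | rfl | exact Subsingleton.elim _ _

/-- Arshon's expression: for `0 ≤ k ≤ m`,
`k! · R_W(m, m−k) = ∑_{j=0}^{k} (−1)^{k−j} C(k,j) (j+1)^{⌈m/2⌉} j^{⌊m/2⌋}` (with `0^0 = 1`). -/
theorem white_bishop_arshon (m k : ℕ) (hk : k ≤ m) :
    (Nat.factorial k * whiteCount m (m - k) : ℤ) =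
      ∑ j ∈ Finset.range (k + 1),
        (-1 : ℤ) ^ (k - j) * Nat.choose k j * ((j : ℤ) + 1) ^ ((m + 1) / 2) *
          (j : ℤ) ^ (m / 2) := by
  classical
  have hL : (whiteCount m (m - k) : ℤ) = (W m (m - k) : ℤ) := by
    rw [whiteCount_eq_wc, W_eq_wc]
  have step1 : ∀ j : ℕ, ((j : ℤ) + 1) ^ ((m + 1) / 2) * (j : ℤ) ^ (m / 2) = (NN m j : ℤ) := by
    intro j
    rw [NN_eq_pow]
    push_cast
    ring
  have step2 : ∀ j : ℕ, (NN m j : ℤ)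
      = ∑ t ∈ range (m + 1), (W m t : ℤ) * (Nat.descFactorial j (m - t) : ℤ) := by
    intro j
    rw [NN_eq_sum]
    push_cast
    ring
  calc ((Nat.factorial k : ℤ) * (whiteCount m (m - k) : ℤ))
      = (W m (m - k) : ℤ) * (Nat.factorial k : ℤ) := by rw [hL]; ring
    _ = ∑ t ∈ range (m + 1), (W m t : ℤ) * (if m - t = k then (Nat.factorial k : ℤ) else 0) := by
        symm
        rw [Finset.sum_eq_single (m - k)]
        · rw [if_pos (by omega)]
        · intro t ht hne
          rw [mem_range] at ht
          rw [if_neg (by omega), mul_zero]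
        · intro h
          exact absurd (mem_range.mpr (by omega)) h
    _ = ∑ t ∈ range (m + 1), (W m t : ℤ) *
          ∑ j ∈ range (k + 1), (-1 : ℤ) ^ (k - j) * (Nat.choose k j : ℤ) *
            (Nat.descFactorial j (m - t) : ℤ) := by
        apply sum_congr rfl
        intro t _
        rw [alt_sum k (m - t)]
    _ = ∑ t ∈ range (m + 1), ∑ j ∈ range (k + 1),
          (-1 : ℤ) ^ (k - j) * (Nat.choose k j : ℤ) *
            ((W m t : ℤ) * (Nat.descFactorial j (m - t) : ℤ)) := by
        apply sum_congr rfl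
        intro t _
        rw [mul_sum]
        apply sum_congr rfl
        intro j _
        ring
    _ = ∑ j ∈ range (k + 1), ∑ t ∈ range (m + 1),
          (-1 : ℤ) ^ (k - j) * (Nat.choose k j : ℤ) *
            ((W m t : ℤ) * (Nat.descFactorial j (m - t) : ℤ)) := sum_comm
    _ = ∑ j ∈ range (k + 1),
        (-1 : ℤ) ^ (k - j) * Nat.choose k j * ((j : ℤ) + 1) ^ ((m + 1) / 2) *
          (j : ℤ) ^ (m / 2) := by
        apply sum_congr rfl
        intro j _
        rw [← mul_sum, ← step2 j, ← step1 j]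
        ring
end
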